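/- Let $m, n$ be positive integers with $m \geq n$, and let $x$ be a rational (or real) number that is not an integer in $[-m, 0]$. Then $\sum_{k=0}^{n} \binom{m+k}{k}\binom{m}{k}\binom{n+k}{k}\binom{n}{k} \Big\{ \frac{-k}{(x+k)^2} + \frac{1 + k(H_{m+k}^{(1)} + H_{m-k}^{(1)} + H_{n+k}^{(1)} + H_{n-k}^{(1)} - 4H_k^{(1)})}{x+k} \Big\} + \sum_{k=n+1}^{m} \frac{(-1)^{k-n}}{x+k} \binom{m+k}{k}\binom{m}{k}\binom{n+k}{k}/\binom{k-1}{n} = \frac{x\,(1-x)_n\,(1-x)_m}{(x)_{n+1}\,(x)_{m+1}}$, where $(a)_r := a(a+1)\cdots(a+r-1)$ is the rising factorial with $(a)_0 := 1$. -/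

import Mathlib

open Finset

/-- Generalized harmonicSum sum `H n^{(i)} = ∑_{j=1}^n 1/j^i`. -/
def harmonicSum (i n : ℕ) : ℚ := ∑ j ∈ Finset.range n, (1 : ℚ) / ((j : ℚ) + 1) ^ i

/-- Rising factorial `(a)_r = a(a+1)⋯(a+r-1)`. -/
def riseFact (a : ℚ) (r : ℕ) : ℚ := ∏ j ∈ Finset.range r, (a + j)

section Stmt3Aux
open Polynomial
noncomputable section
namespace Stmt3Aux

abbrev H (t : ℕ) : ℚ := harmonicSum 1 t

lemma H_succ (t : ℕ) : H (t+1) = H t + 1/((t:ℚ)+1) := by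
  simp [H, harmonicSum, Finset.sum_range_succ]

lemma fact_ne (k : ℕ) : (k.factorial : ℚ) ≠ 0 := by exact_mod_cast k.factorial_ne_zero

lemma prod_fact (k : ℕ) : ∏ j ∈ range k, ((j:ℚ)+1) = k.factorial := by
  exact_mod_cast congrArg (Nat.cast : ℕ → ℚ) (Finset.prod_range_add_one_eq_factorial k)

/-- ∏_{j<t} (j+1+k) = (t+k)!/k!  -/
lemma prod_shift (k t : ℕ) : ∏ j ∈ range t, ((j:ℚ) + 1 + k) = (t+k).factorial / k.factorial := by
  induction t with
  | zero => simp [div_self (fact_ne k)]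
  | succ t ih =>
    rw [Finset.prod_range_succ, ih]
    have e : ((t+1+k).factorial : ℚ) = ((t:ℚ)+1+k) * (t+k).factorial := by
      have h : t+1+k = (t+k)+1 := by omega
      rw [h, Nat.factorial_succ]; push_cast; ring
    rw [e]; ring

/-- ∑_{j<t} 1/(j+1+k) = H (t+k) - H k -/
lemma sum_shift (k t : ℕ) : ∑ j ∈ range t, 1/((j:ℚ) + 1 + k) = H (t+k) - H k := by
  induction t with
  | zero => simp
  | succ t ih =>
    rw [Finset.sum_range_succ, ih]
    have h : t+1+k = (t+k)+1 := by omega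
    rw [h, H_succ]
    push_cast
    ring

/-- ∏_{j<k} (j - k) = (-1)^k k! -/
lemma prod_range_sub (k : ℕ) : ∏ j ∈ range k, ((j:ℚ) - k) = (-1)^k * k.factorial := by
  have h := Finset.prod_range_reflect (fun j => (j:ℚ) - k) k
  rw [← h]
  have hc : ∀ j ∈ range k, ((k - 1 - j : ℕ) : ℚ) - k = (-1) * ((j:ℚ)+1) := by
    intro j hj
    simp only [mem_range] at hj
    rw [Nat.cast_sub (by omega), Nat.cast_sub (by omega)]
    push_cast; ring
  rw [Finset.prod_congr rfl hc, Finset.prod_mul_distrib, Finset.prod_const, Finset.card_range,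
    prod_fact]

/-- ∑_{j<k} 1/(j - k) = - H k -/
lemma sum_range_sub (k : ℕ) : ∑ j ∈ range k, 1/((j:ℚ) - k) = - H k := by
  have h := Finset.sum_range_reflect (fun j => 1/((j:ℚ) - k)) k
  rw [← h]
  have hc : ∀ j ∈ range k, 1/(((k - 1 - j : ℕ) : ℚ) - k) = -(1/((j:ℚ)+1)) := by
    intro j hj
    simp only [mem_range] at hj
    rw [Nat.cast_sub (by omega), Nat.cast_sub (by omega)]
    push_cast
    rw [show (k:ℚ) - 1 - j - k = -((j:ℚ)+1) by ring, one_div, one_div, ← inv_neg]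
  rw [Finset.sum_congr rfl hc, Finset.sum_neg_distrib]
  simp [H, harmonicSum]

lemma erase_succ (k t : ℕ) (h : k ≤ t) :
    (range (t+2)).erase k = insert (t+1) ((range (t+1)).erase k) := by
  rw [Finset.range_add_one (n := t+1), Finset.erase_insert_of_ne (by omega)]

/-- ∏_{j ∈ range(t+1) \ {k}} (j - k) = (-1)^k k! (t-k)! -/
lemma prod_erase_eval (k : ℕ) : ∀ t, k ≤ t →
    ∏ j ∈ (range (t+1)).erase k, ((j:ℚ) - k) = (-1)^k * k.factorial * (t-k).factorial := by
  refine Nat.le_induction ?_ ?_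
  · rw [Finset.range_add_one, Finset.erase_insert (by simp), prod_range_sub]
    simp
  · intro t ht ih
    rw [erase_succ k t ht, Finset.prod_insert (by simp), ih]
    have e : ((t+1-k).factorial : ℚ) = ((t:ℚ)+1-k) * (t-k).factorial := by
      have h1 : t+1-k = (t-k)+1 := by omega
      rw [h1, Nat.factorial_succ]
      have h2 : ((t-k:ℕ):ℚ) = (t:ℚ)-k := by rw [Nat.cast_sub ht]
      push_cast [h2]; ring
    rw [e]; push_cast; ring

/-- ∑_{j ∈ range(t+1) \ {k}} 1/(j - k) = H(t-k) - H k -/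
lemma sum_erase_eval (k : ℕ) : ∀ t, k ≤ t →
    ∑ j ∈ (range (t+1)).erase k, 1/((j:ℚ) - k) = H (t-k) - H k := by
  refine Nat.le_induction ?_ ?_
  · rw [Finset.range_add_one, Finset.erase_insert (by simp), sum_range_sub]
    simp [H, harmonicSum]
  · intro t ht ih
    rw [erase_succ k t ht, Finset.sum_insert (by simp), ih]
    have h1 : t+1-k = (t-k)+1 := by omega
    rw [h1, H_succ]
    have h2 : ((t-k:ℕ):ℚ) = (t:ℚ)-k := by rw [Nat.cast_sub ht]
    push_cast [h2]; ring

/-- for t < k : ∏_{j ∈ range(t+1)} (j - k) = (-1)^(t+1) k!/(k-t-1)! -/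
lemma prod_range_sub' (k t : ℕ) (h : t < k) :
    ∏ j ∈ range (t+1), ((j:ℚ) - k) = (-1)^(t+1) * k.factorial / (k-t-1).factorial := by
  have hr := Finset.prod_range_reflect (fun j => (j:ℚ) - k) (t+1)
  rw [← hr]
  have hc : ∀ j ∈ range (t+1), ((t + 1 - 1 - j : ℕ) : ℚ) - k = (-1) * ((j:ℚ) + 1 + (k-t-1:ℕ)) := by
    intro j hj
    simp only [mem_range] at hj
    rw [Nat.cast_sub (by omega), Nat.cast_sub (by omega), Nat.cast_sub (by omega), Nat.cast_sub (by omega)]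
    push_cast; ring
  rw [Finset.prod_congr rfl hc, Finset.prod_mul_distrib, Finset.prod_const, Finset.card_range,
    prod_shift]
  have h1 : t+1+(k-t-1) = k := by omega
  rw [h1]; ring

lemma eval_deriv_prod_add (s : Finset ℕ) (a : ℚ) :
    eval a (derivative (∏ j ∈ s, (X + C (j:ℚ)))) = ∑ i ∈ s, ∏ j ∈ s.erase i, (a + j) := by
  have hd : derivative (∏ j ∈ s, (X + C (j:ℚ)))
      = ∑ b ∈ s, (∏ a ∈ s.erase b, (X + C (a:ℚ))) * derivative (X + C (b:ℚ)) :=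
    Polynomial.derivative_prod
  rw [hd]
  simp [eval_finset_sum, eval_prod]

lemma eval_deriv_prod_sub (s : Finset ℕ) (a : ℚ) :
    eval a (derivative (∏ j ∈ s, (C ((j:ℚ)+1) - X))) = -∑ i ∈ s, ∏ j ∈ s.erase i, ((j:ℚ)+1-a) := by
  have hd : derivative (∏ j ∈ s, (C ((j:ℚ)+1) - X))
      = ∑ b ∈ s, (∏ a ∈ s.erase b, (C ((a:ℚ)+1) - X)) * derivative (C ((b:ℚ)+1) - X) :=
    Polynomial.derivative_prod
  rw [hd]
  simp [eval_finset_sum, eval_prod, Finset.sum_neg_distrib]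

lemma sum_prod_erase (s : Finset ℕ) (g : ℕ → ℚ) (hg : ∀ i ∈ s, g i ≠ 0) :
    ∑ i ∈ s, ∏ j ∈ s.erase i, g j = (∏ j ∈ s, g j) * ∑ i ∈ s, 1/(g i) := by
  rw [Finset.mul_sum]
  refine Finset.sum_congr rfl fun i hi => ?_
  rw [← Finset.mul_prod_erase s g hi]
  field_simp [hg i hi]

lemma eval_zero_of_dvd {a : ℚ} {p : ℚ[X]} (h : X - C a ∣ p) : eval a p = 0 :=
  (Polynomial.dvd_iff_isRoot.mp h)

lemma sq_dvd {a : ℚ} {p : ℚ[X]} (h0 : eval a p = 0) (h1 : eval a (derivative p) = 0) :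
    (X - C a)^2 ∣ p := by
  obtain ⟨q, hq⟩ := Polynomial.dvd_iff_isRoot.mpr h0
  have hq' : eval a q = 0 := by
    have := hq ▸ h1
    simp [Polynomial.derivative_mul] at this
    simpa using this
  obtain ⟨r, hr⟩ := Polynomial.dvd_iff_isRoot.mpr hq'
  rw [hq, hr]; ring_nf; exact ⟨r, by ring⟩

lemma deriv_eval_zero_of_sq_dvd {a : ℚ} {p : ℚ[X]} (h : (X - C a)^2 ∣ p) :
    eval a p = 0 ∧ eval a (derivative p) = 0 := by
  obtain ⟨w, hw⟩ := h
  subst hw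
  constructor
  · simp
  · simp [Polynomial.derivative_mul, Polynomial.derivative_pow]

lemma sum_exps (m n : ℕ) (hmn : n ≤ m) :
    ∑ k ∈ range (m+1), (if k ≤ n then 2 else 1) = n + m + 2 := by
  have h1 : ∀ k, (if k ≤ n then 2 else 1) = 1 + (if k ≤ n then 1 else 0) := by
    intro k; split <;> rfl
  simp_rw [h1, Finset.sum_add_distrib, Finset.sum_const, Finset.card_range]
  have hf : Finset.filter (fun k => k ≤ n) (range (m+1)) = range (n+1) := by
    ext k; simp; omega
  have h2 : ∑ x ∈ range (m+1), (if x ≤ n then 1 else 0)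
      = ∑ x ∈ Finset.filter (fun k => k ≤ n) (range (m+1)), 1 := (Finset.sum_filter _ _).symm
  rw [h2, hf]
  simp; omega

lemma poly_eq_zero (m n : ℕ) (hmn : n ≤ m) (R : ℚ[X]) (hdeg : R.natDegree ≤ n+m+1)
    (hdvd : ∀ k ∈ range (m+1), (X - C (-(k:ℚ)))^(if k ≤ n then 2 else 1) ∣ R) : R = 0 := by
  by_contra hR
  have hinj : Function.Injective (fun k : ℕ => -(k:ℚ)) := by
    intro a b h; simpa using h
  have hpair : (↑(range (m+1)) : Set ℕ).Pairwise
      (Function.onFun IsCoprime fun k => (X - C (-(k:ℚ)))^(if k ≤ n then 2 else 1)) := by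
    intro a _ b _ hab
    exact ((Polynomial.pairwise_coprime_X_sub_C hinj) hab).pow
  have hdvd' := Finset.prod_dvd_of_coprime hpair hdvd
  have hdeg' := Polynomial.natDegree_le_of_dvd hdvd' hR
  rw [Polynomial.natDegree_prod] at hdeg'
  · simp_rw [Polynomial.natDegree_pow, Polynomial.natDegree_X_sub_C, mul_one] at hdeg'
    rw [sum_exps m n hmn] at hdeg'
    omega
  · intro k _
    exact pow_ne_zero _ (Polynomial.X_sub_C_ne_zero _)

def Pp (t : ℕ) : ℚ[X] := ∏ j ∈ range (t+1), (X + C (j:ℚ))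
def A (t k : ℕ) : ℚ[X] := ∏ j ∈ (range (t+1)).erase k, (X + C (j:ℚ))
def U (t : ℕ) : ℚ[X] := ∏ j ∈ range t, (C ((j:ℚ)+1) - X)
def Np (m n : ℕ) : ℚ[X] := X * U n * U m

lemma evA (t k : ℕ) (h : k ≤ t) :
    eval (-(k:ℚ)) (A t k) = (-1)^k * k.factorial * (t-k).factorial := by
  rw [A, eval_prod, ← prod_erase_eval k t h]
  exact Finset.prod_congr rfl fun j _ => by simp; try ring

lemma evA' (t k : ℕ) (h : k ≤ t) :
    eval (-(k:ℚ)) (derivative (A t k)) =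
      (-1)^k * k.factorial * (t-k).factorial * (H (t-k) - H k) := by
  rw [A, eval_deriv_prod_add]
  rw [sum_prod_erase _ (fun j => -(k:ℚ) + j) ?hg]
  case hg =>
    intro i hi
    simp only [Finset.mem_erase, Finset.mem_range] at hi
    have : (i:ℚ) ≠ (k:ℚ) := by exact_mod_cast hi.1
    intro hc; apply this; linarith
  have h1 : ∏ j ∈ (range (t+1)).erase k, (-(k:ℚ) + j) = (-1)^k * k.factorial * (t-k).factorial := by
    rw [← prod_erase_eval k t h]; exact Finset.prod_congr rfl fun j _ => by ring
  have h2 : ∑ i ∈ (range (t+1)).erase k, 1/(-(k:ℚ) + i) = H (t-k) - H k := by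
    rw [← sum_erase_eval k t h]; exact Finset.sum_congr rfl fun j _ => by rw [add_comm, ← sub_eq_add_neg]
  rw [h1, h2]

lemma evU (t k : ℕ) : eval (-(k:ℚ)) (U t) = (t+k).factorial / k.factorial := by
  rw [U, eval_prod, ← prod_shift k t]
  exact Finset.prod_congr rfl fun j _ => by simp; try ring

lemma evU' (t k : ℕ) :
    eval (-(k:ℚ)) (derivative (U t)) = -((t+k).factorial / k.factorial) * (H (t+k) - H k) := by
  rw [U, eval_deriv_prod_sub]
  rw [sum_prod_erase _ (fun j => (j:ℚ) + 1 - (-(k:ℚ))) ?hg]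
  case hg =>
    intro i _
    have : (0:ℚ) < (i:ℚ) + 1 + k := by positivity
    intro hc; rw [sub_neg_eq_add] at hc; linarith
  have h1 : ∏ j ∈ range t, ((j:ℚ) + 1 - (-(k:ℚ))) = (t+k).factorial / k.factorial := by
    rw [← prod_shift k t]; exact Finset.prod_congr rfl fun j _ => by ring
  have h2 : ∑ i ∈ range t, 1/((i:ℚ) + 1 - (-(k:ℚ))) = H (t+k) - H k := by
    rw [← sum_shift k t]; exact Finset.sum_congr rfl fun j _ => by rw [sub_neg_eq_add]
  rw [h1, h2]; ring

lemma evPp' (t k : ℕ) (h : t < k) :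
    eval (-(k:ℚ)) (Pp t) = (-1)^(t+1) * k.factorial / (k-t-1).factorial := by
  rw [Pp, eval_prod, ← prod_range_sub' k t h]
  exact Finset.prod_congr rfl fun j _ => by simp; try ring

lemma dvd_A (t k k' : ℕ) (h : k ≤ t) (h' : k' ≤ t) (hne : k' ≠ k) :
    (X - C (-(k':ℚ))) ∣ A t k := by
  rw [show (X - C (-(k':ℚ))) = X + C ((k':ℚ)) by rw [map_neg, sub_neg_eq_add]]
  rw [A]
  exact Finset.dvd_prod_of_mem _ (by simp [Finset.mem_erase, hne]; omega)

lemma dvd_Pp (t k : ℕ) (h : k ≤ t) : (X - C (-(k:ℚ))) ∣ Pp t := by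
  rw [show (X - C (-(k:ℚ))) = X + C ((k:ℚ)) by rw [map_neg, sub_neg_eq_add]]
  exact Finset.dvd_prod_of_mem _ (by simp; omega)

def Cb (m n k : ℕ) : ℚ := (((m+k).choose k : ℕ) : ℚ) * (m.choose k) * ((n+k).choose k) * (n.choose k)
def Bb (m n k : ℕ) : ℚ := 1 + k * (H (m+k) + H (m-k) + H (n+k) + H (n-k) - 4 * H k)
def Db (m n k : ℕ) : ℚ :=
  (-1)^(k-n) * (((m+k).choose k : ℕ) : ℚ) * (m.choose k) * ((n+k).choose k) / ((k-1).choose n)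

lemma key1 (m n k : ℕ) (hk : k ≤ n) (hmn : n ≤ m) :
    Cb m n k * ((-1)^k * k.factorial * (n-k).factorial)
      * ((-1)^k * k.factorial * (m-k).factorial)
    = ((n+k).factorial / k.factorial) * ((m+k).factorial / k.factorial) := by
  have hs : ((-1:ℚ)^k) * ((-1)^k) = 1 := by
    rw [← pow_add]; exact Even.neg_one_pow ⟨k, by omega⟩
  have hrw : Cb m n k * ((-1:ℚ)^k * k.factorial * (n-k).factorial)
      * ((-1)^k * k.factorial * (m-k).factorial)
      = Cb m n k * ((k.factorial:ℚ) * (n-k).factorial) * ((k.factorial:ℚ) * (m-k).factorial)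
        * (((-1:ℚ)^k) * ((-1)^k)) := by ring
  rw [hrw, hs, mul_one, Cb]
  rw [Nat.cast_choose ℚ (le_add_self : k ≤ m+k), Nat.cast_choose ℚ (le_trans hk hmn),
    Nat.cast_choose ℚ (le_add_self : k ≤ n+k), Nat.cast_choose ℚ hk]
  rw [show m+k-k = m from by omega, show n+k-k = n from by omega]
  field_simp [fact_ne]

lemma key2 (m n k : ℕ) (hn : 0 < n) (hk : n < k) (hkm : k ≤ m) :
    Db m n k * ((-1)^(n+1) * k.factorial / (k-n-1).factorial)
      * ((-1)^k * k.factorial * (m-k).factorial)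
    = (-(k:ℚ)) * ((n+k).factorial / k.factorial) * ((m+k).factorial / k.factorial) := by
  have hsg : ((-1:ℚ)^(k-n)) * ((-1)^(n+1)) * ((-1)^k) = -1 := by
    rw [← pow_add, ← pow_add]
    exact Odd.neg_one_pow ⟨k, by omega⟩
  have hch4 : (((k-1).choose n : ℕ) : ℚ) ≠ 0 := by
    exact_mod_cast Nat.ne_of_gt (Nat.choose_pos (by omega))
  have efk : (k.factorial : ℚ) = k * (k-1).factorial := by
    exact_mod_cast congrArg (Nat.cast : ℕ → ℚ) (Nat.mul_factorial_pred (by omega)).symm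
  have habs : ((((m+k).choose k : ℕ) : ℚ) * (m.choose k) * ((n+k).choose k) / ((k-1).choose n))
      * ((k.factorial:ℚ)/(k-n-1).factorial) * ((k.factorial:ℚ)*(m-k).factorial)
      = (k:ℚ) * ((n+k).factorial / k.factorial) * ((m+k).factorial / k.factorial) := by
    rw [Nat.cast_choose ℚ (le_add_self : k ≤ m+k), Nat.cast_choose ℚ hkm,
      Nat.cast_choose ℚ (le_add_self : k ≤ n+k), Nat.cast_choose ℚ (show n ≤ k-1 from by omega)]
    rw [show m+k-k = m from by omega, show n+k-k = n from by omega,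
      show k-1-n = k-n-1 from by omega]
    rw [efk]
    have hk0 : (k:ℚ) ≠ 0 := Nat.cast_ne_zero.mpr (by omega)
    field_simp [fact_ne, hch4, hk0]
  calc Db m n k * ((-1)^(n+1) * k.factorial / (k-n-1).factorial)
      * ((-1)^k * k.factorial * (m-k).factorial)
      = (((-1:ℚ)^(k-n)) * ((-1)^(n+1)) * ((-1)^k))
        * (((((m+k).choose k : ℕ) : ℚ) * (m.choose k) * ((n+k).choose k) / ((k-1).choose n))
          * ((k.factorial:ℚ)/(k-n-1).factorial) * ((k.factorial:ℚ)*(m-k).factorial)) := by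
        rw [Db]; ring
    _ = -1 * ((k:ℚ) * ((n+k).factorial / k.factorial) * ((m+k).factorial / k.factorial)) := by
        rw [hsg, habs]
    _ = (-(k:ℚ)) * ((n+k).factorial / k.factorial) * ((m+k).factorial / k.factorial) := by ring

def Tm (m n k : ℕ) : ℚ[X] :=
  C (Cb m n k) * (C (-(k:ℚ)) + C (Bb m n k) * (X + C (k:ℚ))) * (A n k * A m k)
def Sm (m n k : ℕ) : ℚ[X] := C (Db m n k) * (Pp n * A m k)
def Lp (m n : ℕ) : ℚ[X] := (∑ k ∈ range (n+1), Tm m n k) + ∑ k ∈ Icc (n+1) m, Sm m n k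

lemma sq_dvd_Tm (m n k j : ℕ) (hk : k ≤ n) (hmn : n ≤ m) (hj : j ≤ n) (hjk : j ≠ k) :
    (X - C (-(k:ℚ)))^2 ∣ Tm m n j := by
  have d1 : (X - C (-(k:ℚ))) ∣ A n j := dvd_A n j k hj hk (fun h => hjk h.symm)
  have d2 : (X - C (-(k:ℚ))) ∣ A m j := dvd_A m j k (le_trans hj hmn) (le_trans hk hmn) (fun h => hjk h.symm)
  have h12 : (X - C (-(k:ℚ)))^2 ∣ A n j * A m j := by
    rw [pow_two]; exact mul_dvd_mul d1 d2
  exact h12.trans ⟨C (Cb m n j) * (C (-(j:ℚ)) + C (Bb m n j) * (X + C (j:ℚ))), by rw [Tm]; ring⟩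

lemma sq_dvd_Sm (m n k j : ℕ) (hk : k ≤ n) (hmn : n ≤ m) (hj1 : n < j) (hj2 : j ≤ m) :
    (X - C (-(k:ℚ)))^2 ∣ Sm m n j := by
  have d1 : (X - C (-(k:ℚ))) ∣ Pp n := dvd_Pp n k hk
  have d2 : (X - C (-(k:ℚ))) ∣ A m j := dvd_A m j k hj2 (le_trans hk hmn) (by omega)
  have h12 : (X - C (-(k:ℚ)))^2 ∣ Pp n * A m j := by
    rw [pow_two]; exact mul_dvd_mul d1 d2
  exact h12.trans ⟨C (Db m n j), by rw [Sm]; ring⟩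

lemma dvd_Tm' (m n k j : ℕ) (hk1 : n < k) (hk2 : k ≤ m) (hj : j ≤ n) :
    (X - C (-(k:ℚ))) ∣ Tm m n j := by
  have d2 : (X - C (-(k:ℚ))) ∣ A m j := dvd_A m j k (le_trans hj (by omega)) hk2 (by omega)
  exact d2.trans ⟨C (Cb m n j) * (C (-(j:ℚ)) + C (Bb m n j) * (X + C (j:ℚ))) * A n j, by rw [Tm]; ring⟩

lemma dvd_Sm' (m n k j : ℕ) (hk2 : k ≤ m) (hj2 : j ≤ m) (hjk : j ≠ k) :
    (X - C (-(k:ℚ))) ∣ Sm m n j := by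
  have d2 : (X - C (-(k:ℚ))) ∣ A m j := dvd_A m j k hj2 hk2 (fun h => hjk h.symm)
  exact d2.trans ⟨C (Db m n j) * Pp n, by rw [Sm]; ring⟩

lemma evNp (m n k : ℕ) :
    eval (-(k:ℚ)) (Np m n)
      = (-(k:ℚ)) * ((n+k).factorial / k.factorial) * ((m+k).factorial / k.factorial) := by
  rw [Np, eval_mul, eval_mul, eval_X, evU, evU]

lemma evLp1 (m n k : ℕ) (hk : k ≤ n) (hmn : n ≤ m) :
    eval (-(k:ℚ)) (Lp m n)
      = Cb m n k * (-(k:ℚ)) * (((-1)^k * k.factorial * (n-k).factorial)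
          * ((-1)^k * k.factorial * (m-k).factorial)) := by
  rw [Lp, eval_add, eval_finset_sum, eval_finset_sum]
  have h2 : ∑ j ∈ Icc (n+1) m, eval (-(k:ℚ)) (Sm m n j) = 0 := by
    refine Finset.sum_eq_zero fun j hj => ?_
    simp only [Finset.mem_Icc] at hj
    exact (deriv_eval_zero_of_sq_dvd (sq_dvd_Sm m n k j hk hmn (by omega) hj.2)).1
  rw [h2, add_zero]
  rw [Finset.sum_eq_single_of_mem k (by simp; omega)]
  · rw [Tm]
    simp only [eval_mul, eval_add, eval_C, eval_X]
    rw [evA n k hk, evA m k (le_trans hk hmn)]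
    ring
  · intro j hj hjk
    simp only [Finset.mem_range] at hj
    exact (deriv_eval_zero_of_sq_dvd (sq_dvd_Tm m n k j hk hmn (by omega) hjk)).1

lemma evLp2 (m n k : ℕ) (hk1 : n < k) (hk2 : k ≤ m) :
    eval (-(k:ℚ)) (Lp m n)
      = Db m n k * ((-1)^(n+1) * (k.factorial : ℚ) / (k-n-1).factorial)
          * ((-1)^k * k.factorial * (m-k).factorial) := by
  rw [Lp, eval_add, eval_finset_sum, eval_finset_sum]
  have h1 : ∑ j ∈ range (n+1), eval (-(k:ℚ)) (Tm m n j) = 0 := by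
    refine Finset.sum_eq_zero fun j hj => ?_
    simp only [Finset.mem_range] at hj
    exact eval_zero_of_dvd (dvd_Tm' m n k j hk1 hk2 (by omega))
  rw [h1, zero_add]
  rw [Finset.sum_eq_single_of_mem k (by simp; omega)]
  · rw [Sm]
    simp only [eval_mul, eval_C]
    rw [evPp' n k hk1, evA m k hk2]
    ring
  · intro j hj hjk
    simp only [Finset.mem_Icc] at hj
    exact eval_zero_of_dvd (dvd_Sm' m n k j hk2 hj.2 hjk)

lemma evLp1' (m n k : ℕ) (hk : k ≤ n) (hmn : n ≤ m) :
    eval (-(k:ℚ)) (derivative (Lp m n))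
      = Cb m n k * Bb m n k * (((-1)^k * k.factorial * (n-k).factorial)
          * ((-1)^k * k.factorial * (m-k).factorial))
        + Cb m n k * (-(k:ℚ)) *
          (((-1)^k * k.factorial * (n-k).factorial * (H (n-k) - H k))
              * ((-1)^k * k.factorial * (m-k).factorial)
            + ((-1)^k * k.factorial * (n-k).factorial)
              * ((-1)^k * k.factorial * (m-k).factorial * (H (m-k) - H k))) := by
  rw [Lp, derivative_add, derivative_sum, derivative_sum, eval_add, eval_finset_sum, eval_finset_sum]
  have h2 : ∑ j ∈ Icc (n+1) m, eval (-(k:ℚ)) (derivative (Sm m n j)) = 0 := by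
    refine Finset.sum_eq_zero fun j hj => ?_
    simp only [Finset.mem_Icc] at hj
    exact (deriv_eval_zero_of_sq_dvd (sq_dvd_Sm m n k j hk hmn (by omega) hj.2)).2
  rw [h2, add_zero]
  rw [Finset.sum_eq_single_of_mem k (by simp; omega)]
  · have hD : derivative (Tm m n k)
        = C (Cb m n k) * (C (Bb m n k) * (X + C (k:ℚ)) + (C (-(k:ℚ)) + C (Bb m n k) * (X + C (k:ℚ)))) * 0
          + C (Cb m n k) * C (Bb m n k) * (A n k * A m k)
          + C (Cb m n k) * (C (-(k:ℚ)) + C (Bb m n k) * (X + C (k:ℚ)))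
            * (derivative (A n k) * A m k + A n k * derivative (A m k)) := by
      rw [Tm]
      simp only [derivative_mul, derivative_add, derivative_C, derivative_X, zero_mul, mul_zero,
        zero_add, add_zero, mul_one]
      try ring
    rw [hD]
    simp only [eval_add, eval_mul, eval_C, eval_X, mul_zero, zero_add, zero_mul]
    rw [evA n k hk, evA m k (le_trans hk hmn), evA' n k hk, evA' m k (le_trans hk hmn)]
    ring
  · intro j hj hjk
    simp only [Finset.mem_range] at hj
    exact (deriv_eval_zero_of_sq_dvd (sq_dvd_Tm m n k j hk hmn (by omega) hjk)).2

lemma evNp' (m n k : ℕ) :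
    eval (-(k:ℚ)) (derivative (Np m n))
      = (((n+k).factorial / k.factorial) + (-(k:ℚ)) * (-((n+k).factorial / k.factorial) * (H (n+k) - H k)))
          * ((m+k).factorial / k.factorial)
        + (-(k:ℚ)) * ((n+k).factorial / k.factorial)
          * (-((m+k).factorial / k.factorial) * (H (m+k) - H k)) := by
  rw [Np]
  simp only [derivative_mul, derivative_X, one_mul]
  simp only [eval_add, eval_mul, eval_X, evU, evU']
  try ring

lemma B1 (m n k : ℕ) (hn : 0 < n) (hmn : n ≤ m) (hk : k ≤ m) :
    eval (-(k:ℚ)) (Lp m n - Np m n) = 0 := by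
  rw [eval_sub, evNp]
  by_cases hkn : k ≤ n
  · rw [evLp1 m n k hkn hmn]
    linear_combination (-(k:ℚ)) * key1 m n k hkn hmn
  · rw [evLp2 m n k (by omega) hk]
    linear_combination key2 m n k hn (by omega) hk

lemma B2 (m n k : ℕ) (hn : 0 < n) (hmn : n ≤ m) (hk : k ≤ n) :
    eval (-(k:ℚ)) (derivative (Lp m n - Np m n)) = 0 := by
  rw [derivative_sub, eval_sub, evLp1' m n k hk hmn, evNp']
  have hkey := key1 m n k hk hmn
  simp only [Bb]
  linear_combination (1 + (k:ℚ) * (H (m+k) + H (n+k) - 2 * H k)) * hkey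

lemma degA (t k : ℕ) (h : k ≤ t) : (A t k).natDegree ≤ t := by
  refine le_trans (Polynomial.natDegree_prod_le _ _) ?_
  have : ∀ j ∈ (range (t+1)).erase k, (X + C (j:ℚ)).natDegree = 1 := fun j _ =>
    Polynomial.natDegree_X_add_C _
  rw [Finset.sum_congr rfl this, Finset.sum_const, Finset.card_erase_of_mem (by simp; omega),
    Finset.card_range]
  simp

lemma degPp (t : ℕ) : (Pp t).natDegree ≤ t+1 := by
  refine le_trans (Polynomial.natDegree_prod_le _ _) ?_
  have : ∀ j ∈ range (t+1), (X + C (j:ℚ)).natDegree = 1 := fun j _ =>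
    Polynomial.natDegree_X_add_C _
  rw [Finset.sum_congr rfl this, Finset.sum_const, Finset.card_range]
  simp

lemma degU (t : ℕ) : (U t).natDegree ≤ t := by
  refine le_trans (Polynomial.natDegree_prod_le _ _) ?_
  have : ∀ j ∈ range t, (C ((j:ℚ)+1) - X).natDegree = 1 := by
    intro j _
    rw [show C ((j:ℚ)+1) - X = -(X - C ((j:ℚ)+1)) from by ring, Polynomial.natDegree_neg,
      Polynomial.natDegree_X_sub_C]
  rw [Finset.sum_congr rfl this, Finset.sum_const, Finset.card_range]
  simp

lemma degLp (m n : ℕ) (hmn : n ≤ m) : (Lp m n).natDegree ≤ n+m+1 := by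
  rw [Lp]
  refine le_trans (Polynomial.natDegree_add_le _ _) (max_le ?_ ?_)
  · refine Polynomial.natDegree_sum_le_of_forall_le _ _ fun k hk => ?_
    simp only [Finset.mem_range] at hk
    rw [Tm]
    refine le_trans (Polynomial.natDegree_mul_le) ?_
    have h1 : (C (Cb m n k) * (C (-(k:ℚ)) + C (Bb m n k) * (X + C (k:ℚ)))).natDegree ≤ 1 := by
      refine le_trans (Polynomial.natDegree_mul_le) ?_
      simp only [Polynomial.natDegree_C, zero_add]
      refine le_trans (Polynomial.natDegree_add_le _ _) (max_le (by simp) ?_)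
      refine le_trans (Polynomial.natDegree_mul_le) ?_
      simp only [Polynomial.natDegree_C, zero_add]
      exact le_of_eq (Polynomial.natDegree_X_add_C _)
    have h2 : (A n k * A m k).natDegree ≤ n + m := by
      refine le_trans (Polynomial.natDegree_mul_le) ?_
      exact add_le_add (degA n k (by omega)) (degA m k (by omega))
    omega
  · refine Polynomial.natDegree_sum_le_of_forall_le _ _ fun k hk => ?_
    simp only [Finset.mem_Icc] at hk
    rw [Sm]
    refine le_trans (Polynomial.natDegree_mul_le) ?_
    have h2 : (Pp n * A m k).natDegree ≤ (n+1) + m := by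
      refine le_trans (Polynomial.natDegree_mul_le) ?_
      exact add_le_add (degPp n) (degA m k (by omega))
    simp only [Polynomial.natDegree_C, zero_add]
    omega

lemma degNp (m n : ℕ) : (Np m n).natDegree ≤ n+m+1 := by
  rw [Np]
  refine le_trans (Polynomial.natDegree_mul_le) ?_
  have h1 : (X * U n : ℚ[X]).natDegree ≤ 1 + n :=
    le_trans (Polynomial.natDegree_mul_le) (add_le_add (by simp) (degU n))
  have h2 := degU m
  omega

lemma L_eq_N (m n : ℕ) (hn : 0 < n) (hmn : n ≤ m) : Lp m n = Np m n := by
  have h := poly_eq_zero m n hmn (Lp m n - Np m n)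
    (le_trans (Polynomial.natDegree_sub_le _ _) (max_le (degLp m n hmn) (degNp m n)))
    ?_
  · exact sub_eq_zero.mp h
  · intro k hk
    simp only [Finset.mem_range] at hk
    by_cases hkn : k ≤ n
    · rw [if_pos hkn]
      exact sq_dvd (B1 m n k hn hmn (by omega)) (B2 m n k hn hmn hkn)
    · rw [if_neg hkn, pow_one]
      exact Polynomial.dvd_iff_isRoot.mpr (B1 m n k hn hmn (by omega))

end Stmt3Aux
end
end Stmt3Aux

theorem stmt_3 (m n : ℕ) (hn : 0 < n) (hmn : n ≤ m) (x : ℚ)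
    (hx : ∀ j : ℕ, j ≤ m → x + (j : ℚ) ≠ 0) :
    (∑ k ∈ Finset.range (n + 1),
      ((m + k).choose k : ℚ) * (m.choose k : ℚ) * ((n + k).choose k : ℚ) * (n.choose k : ℚ) *
        (-(k : ℚ) / (x + k) ^ 2
          + (1 + (k : ℚ) * (harmonicSum 1 (m + k) + harmonicSum 1 (m - k) + harmonicSum 1 (n + k)
              + harmonicSum 1 (n - k) - 4 * harmonicSum 1 k)) / (x + k)))
    + (∑ k ∈ Finset.Icc (n + 1) m,
      (-1 : ℚ) ^ (k - n) / (x + k) * ((m + k).choose k : ℚ) * (m.choose k : ℚ)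
        * ((n + k).choose k : ℚ) / ((k - 1).choose n : ℚ))
    = x * riseFact (1 - x) n * riseFact (1 - x) m
        / (riseFact x (n + 1) * riseFact x (m + 1)) := by
  classical
  open Polynomial Stmt3Aux in
  -- notation
  have hPn : riseFact x (n+1) = eval x (Pp n) := by
    rw [riseFact, Pp, eval_prod]; exact Finset.prod_congr rfl fun j _ => by simp
  have hPm : riseFact x (m+1) = eval x (Pp m) := by
    rw [riseFact, Pp, eval_prod]; exact Finset.prod_congr rfl fun j _ => by simp
  have hUn : riseFact (1-x) n = eval x (U n) := by
    rw [riseFact, U, eval_prod]; exact Finset.prod_congr rfl fun j _ => by simp; ring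
  have hUm : riseFact (1-x) m = eval x (U m) := by
    rw [riseFact, U, eval_prod]; exact Finset.prod_congr rfl fun j _ => by simp; ring
  have hPnne : eval x (Pp n) ≠ 0 := by
    rw [Pp, eval_prod]
    refine Finset.prod_ne_zero_iff.mpr fun j hj => ?_
    simp only [Finset.mem_range] at hj
    simpa using hx j (by omega)
  have hPmne : eval x (Pp m) ≠ 0 := by
    rw [Pp, eval_prod]
    refine Finset.prod_ne_zero_iff.mpr fun j hj => ?_
    simp only [Finset.mem_range] at hj
    simpa using hx j (by omega)
  set D : ℚ := eval x (Pp n) * eval x (Pp m) with hD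
  have hDne : D ≠ 0 := mul_ne_zero hPnne hPmne
  -- evaluation of Pp via erase
  have hsplit : ∀ t k : ℕ, k ≤ t → eval x (Pp t) = (x + k) * eval x (A t k) := by
    intro t k hkt
    rw [Pp, A, eval_prod, eval_prod,
      ← Finset.mul_prod_erase (range (t+1)) (fun j => eval x (X + C (j:ℚ)))
        (show k ∈ range (t+1) by simp; omega)]
    simp
  apply mul_right_cancel₀ hDne
  rw [add_mul, Finset.sum_mul, Finset.sum_mul]
  have hL : (∑ k ∈ Finset.range (n + 1),
      ((m + k).choose k : ℚ) * (m.choose k : ℚ) * ((n + k).choose k : ℚ) * (n.choose k : ℚ) *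
        (-(k : ℚ) / (x + k) ^ 2
          + (1 + (k : ℚ) * (harmonicSum 1 (m + k) + harmonicSum 1 (m - k) + harmonicSum 1 (n + k)
              + harmonicSum 1 (n - k) - 4 * harmonicSum 1 k)) / (x + k)) * D)
      + (∑ k ∈ Finset.Icc (n + 1) m,
      (-1 : ℚ) ^ (k - n) / (x + k) * ((m + k).choose k : ℚ) * (m.choose k : ℚ)
        * ((n + k).choose k : ℚ) / ((k - 1).choose n : ℚ) * D)
      = eval x (Lp m n) := by
    rw [Lp, eval_add, eval_finset_sum, eval_finset_sum]
    congr 1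
    · refine Finset.sum_congr rfl fun k hk => ?_
      simp only [Finset.mem_range] at hk
      have hkx : x + (k:ℚ) ≠ 0 := hx k (by omega)
      rw [hD, hsplit n k (by omega), hsplit m k (by omega)]
      rw [Tm]
      simp only [eval_mul, eval_add, eval_C, eval_X]
      rw [Cb, Bb]
      simp only [H]
      field_simp
    · refine Finset.sum_congr rfl fun k hk => ?_
      simp only [Finset.mem_Icc] at hk
      have hkx : x + (k:ℚ) ≠ 0 := hx k (by omega)
      have hch4 : (((k-1).choose n : ℕ) : ℚ) ≠ 0 := by
        exact_mod_cast Nat.ne_of_gt (Nat.choose_pos (by omega))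
      rw [hD, hsplit m k (by omega)]
      rw [Sm, Db]
      simp only [eval_mul, eval_C]
      field_simp
  rw [hL, L_eq_N m n hn hmn]
  rw [hPn, hPm, hUn, hUm, Np]
  simp only [eval_mul, eval_X]
  rw [div_mul_cancel₀ _ hDne]
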